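/- Let p≥1/3, δ≥3, and A,B,C>0 with B=(p+1)²A (i.e. A=pK(1+β)/(p+1), B=pK(1+p)(1+β)). Define h(x)=Bx³ + [C - (A+C)x^δ](p+x²)² for x>0. Then h(1)=0 and h'(1)<0, and for every x̄>0 with h(x̄)=0 one has h'(x̄)<0; consequently x=1 is the unique positive zero of h. -/

import Mathlib

open Filter Set Topology

/-- If a continuous function, differentiable on `[a,∞)`, has strictly negative
derivative at every zero in `[a,∞)`, it cannot have two zeros `a < b`. -/
lemma no_two_zeros_of_deriv_neg {f : ℝ → ℝ} {a b : ℝ} (hab : a < b)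
    (hc : Continuous f)
    (hd : ∀ x, a ≤ x → DifferentiableAt ℝ f x)
    (hz : ∀ x, a ≤ x → f x = 0 → deriv f x < 0)
    (ha : f a = 0) (hb : f b = 0) : False := by
  -- slope tendsto at a
  have hza : deriv f a < 0 := hz a le_rfl ha
  have hsa : Tendsto (slope f a) (𝓝[>] a) (𝓝 (deriv f a)) :=
    (hasDerivAt_iff_tendsto_slope.mp (hd a le_rfl).hasDerivAt).mono_left
      (nhdsWithin_mono _ (fun y hy => by simpa using (ne_of_gt hy)))
  have ev1 : ∀ᶠ y in 𝓝[>] a, slope f a y < 0 := hsa.eventually (gt_mem_nhds hza)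
  have ev2 : ∀ᶠ y in 𝓝[>] a, y ∈ Set.Ioo a b :=
    Ioo_mem_nhdsGT_of_mem ⟨le_rfl, hab⟩
  obtain ⟨a', hsl, ha'mem⟩ := (ev1.and ev2).exists
  have hfa' : f a' < 0 := by
    rw [slope_def_field, ha, sub_zero] at hsl
    rcases div_neg_iff.mp hsl with ⟨_, h2⟩ | ⟨h1, _⟩
    · linarith [ha'mem.1]
    · exact h1
  -- slope tendsto at b
  have hzb : deriv f b < 0 := hz b hab.le hb
  have hsb : Tendsto (slope f b) (𝓝[<] b) (𝓝 (deriv f b)) :=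
    (hasDerivAt_iff_tendsto_slope.mp (hd b hab.le).hasDerivAt).mono_left
      (nhdsWithin_mono _ (fun y hy => by simpa using (ne_of_lt hy)))
  have ev3 : ∀ᶠ y in 𝓝[<] b, slope f b y < 0 := hsb.eventually (gt_mem_nhds hzb)
  have ev4 : ∀ᶠ y in 𝓝[<] b, y ∈ Set.Ioo a' b :=
    Ioo_mem_nhdsLT_of_mem ⟨ha'mem.2, le_rfl⟩
  obtain ⟨b', hslb, hb'mem⟩ := (ev3.and ev4).exists
  have hfb' : 0 < f b' := by
    rw [slope_def_field, hb, sub_zero] at hslb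
    rcases div_neg_iff.mp hslb with ⟨h1, _⟩ | ⟨_, h2⟩
    · exact h1
    · linarith [hb'mem.2]
  have ha'b' : a' < b' := hb'mem.1
  -- the set of zeros in [a', b']
  set S : Set ℝ := Set.Icc a' b' ∩ f ⁻¹' {0} with hS
  have hSclosed : IsClosed S := isClosed_Icc.inter (isClosed_singleton.preimage hc)
  have hSne : S.Nonempty := by
    have h0 : (0 : ℝ) ∈ Set.Icc (f a') (f b') := ⟨hfa'.le, hfb'.le⟩
    obtain ⟨c, hcmem, hfc⟩ := intermediate_value_Icc ha'b'.le hc.continuousOn h0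
    exact ⟨c, hcmem, by simpa using hfc⟩
  have hSbdd : BddBelow S := ⟨a', fun x hx => hx.1.1⟩
  set c := sInf S with hc0
  have hcS : c ∈ S := hSclosed.csInf_mem hSne hSbdd
  have hfc : f c = 0 := by simpa using hcS.2
  have hac : a' < c := lt_of_le_of_ne hcS.1.1 (by
    intro h; rw [← h] at hfc; exact absurd hfc (ne_of_lt hfa'))
  have hca : a ≤ c := le_trans (le_of_lt ha'mem.1) hac.le
  -- f is negative on [a', c)
  have hneg : ∀ y ∈ Set.Ico a' c, f y < 0 := by
    intro y hy
    by_contra hcon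
    push_neg at hcon
    have h0 : (0 : ℝ) ∈ Set.Icc (f a') (f y) := ⟨hfa'.le, hcon⟩
    obtain ⟨z, hzmem, hfz⟩ := intermediate_value_Icc hy.1 hc.continuousOn h0
    have hzS : z ∈ S := ⟨⟨hzmem.1, le_trans hzmem.2 (le_trans hy.2.le hcS.1.2)⟩,
      by simpa using hfz⟩
    have := csInf_le hSbdd hzS
    have : c ≤ y := le_trans this hzmem.2
    exact absurd hy.2 (not_lt.mpr this)
  -- derivative at c is nonnegative, contradiction
  have hderivc : deriv f c < 0 := hz c hca hfc
  have hsc : Tendsto (slope f c) (𝓝[<] c) (𝓝 (deriv f c)) :=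
    (hasDerivAt_iff_tendsto_slope.mp (hd c hca).hasDerivAt).mono_left
      (nhdsWithin_mono _ (fun y hy => by simpa using (ne_of_lt hy)))
  have ev5 : ∀ᶠ y in 𝓝[<] c, 0 ≤ slope f c y := by
    filter_upwards [Ioo_mem_nhdsLT_of_mem (⟨hac, le_rfl⟩ : c ∈ Set.Ioc a' c)]
      with y hy
    rw [slope_def_field, hfc, sub_zero]
    have h1 : f y < 0 := hneg y ⟨hy.1.le, hy.2⟩
    have h2 : y - c < 0 := by linarith [hy.2]
    exact (div_pos_of_neg_of_neg h1 h2).le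
  have : 0 ≤ deriv f c := ge_of_tendsto hsc ev5
  linarith

/-- Public good scheme (ε=0) partnership verification: the sign function
`h(x) = Bx³ + [C-(A+C)x^δ](p+x²)²` has `x=1` as its unique positive zero, with
negative derivative at every positive zero. -/
theorem partnership_sign_function_unique_zero
    (p δ A B C : ℝ) (hp : 1/3 ≤ p) (hppos : 0 < p) (hδ : 3 ≤ δ)
    (hA : 0 < A) (hC : 0 < C) (hB : B = (p + 1) ^ 2 * A) :
    let h : ℝ → ℝ := fun x => B * x ^ 3 + (C - (A + C) * x ^ δ) * (p + x ^ 2) ^ 2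
    h 1 = 0 ∧
    deriv h 1 < 0 ∧
    (∀ x : ℝ, 0 < x → h x = 0 → deriv h x < 0) ∧
    (∀ x : ℝ, 0 < x → h x = 0 → x = 1) := by
  intro h
  have hBpos : 0 < B := by rw [hB]; positivity
  -- the derivative formula
  have hder : ∀ x : ℝ, x ≠ 0 → HasDerivAt h
      (B * (3 * x ^ 2) + (-((A + C) * (δ * x ^ (δ - 1))) * (p + x ^ 2) ^ 2
        + (C - (A + C) * x ^ δ) * (2 * (p + x ^ 2) * (2 * x)))) x := by
    intro x hx
    have e1 : HasDerivAt (fun x : ℝ => B * x ^ 3) (B * (3 * x ^ 2)) x := by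
      have := (hasDerivAt_pow 3 x).const_mul B
      convert this using 1
      all_goals push_cast; rfl
    have e2 : HasDerivAt (fun x : ℝ => C - (A + C) * x ^ δ)
        (-((A + C) * (δ * x ^ (δ - 1)))) x :=
      ((Real.hasDerivAt_rpow_const (Or.inl hx)).const_mul (A + C)).const_sub C
    have e3 : HasDerivAt (fun x : ℝ => (p + x ^ 2) ^ 2)
        (2 * (p + x ^ 2) * (2 * x)) x := by
      have := (((hasDerivAt_pow 2 x).const_add p).pow 2)
      convert this using 1
      all_goals push_cast
      case e'_9 => ring
      all_goals rfl
    exact e1.add (e2.mul e3)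
  have h1 : h 1 = 0 := by
    show B * 1 ^ 3 + (C - (A + C) * (1 : ℝ) ^ δ) * (p + 1 ^ 2) ^ 2 = 0
    rw [Real.one_rpow]
    linear_combination hB
  have claim3 : ∀ x : ℝ, 0 < x → h x = 0 → deriv h x < 0 := by
    intro x hx hhx
    have hD := (hder x hx.ne').deriv
    set s := p + x ^ 2 with hs
    have hspos : 0 < s := by positivity
    set t := x ^ δ with ht
    set u := x ^ (δ - 1) with hu
    have hut : u * x = t := by
      have h2 := Real.rpow_add_one hx.ne' (δ - 1)
      have h3 : δ - 1 + 1 = δ := by ring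
      rw [h3] at h2
      rw [hu, ht, h2]
    have hE : B * x ^ 3 + (C - (A + C) * t) * s ^ 2 = 0 := hhx
    have hAt : (A + C) * t * s ^ 2 = C * s ^ 2 + B * x ^ 3 := by
      linear_combination -hE
    have key : deriv h x * (x * s) =
        (3 - δ) * B * x ^ 3 * s - δ * C * s ^ 3 - 4 * B * x ^ 5 := by
      rw [hD]
      linear_combination (-(A + C) * δ * s ^ 3) * hut - (δ * s + 4 * x ^ 2) * hAt
    have hrhs : (3 - δ) * B * x ^ 3 * s - δ * C * s ^ 3 - 4 * B * x ^ 5 < 0 := by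
      nlinarith [mul_pos (mul_pos hBpos (pow_pos hx 3)) hspos,
        pow_pos hspos 3, pow_pos hx 5, mul_pos hC (pow_pos hspos 3)]
    have hxs : 0 < x * s := mul_pos hx hspos
    nlinarith [key, hrhs, hxs]
  have claim2 : deriv h 1 < 0 := claim3 1 one_pos h1
  have hcont : Continuous h := by
    have : Continuous (fun x : ℝ => x ^ δ) := Real.continuous_rpow_const (by linarith)
    fun_prop
  have claim4 : ∀ x : ℝ, 0 < x → h x = 0 → x = 1 := by
    intro x hx hhx
    by_contra hne
    rcases lt_or_gt_of_ne hne with hlt | hgt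
    · exact no_two_zeros_of_deriv_neg hlt hcont
        (fun y hy => ((hder y (by linarith)).differentiableAt))
        (fun y hy hy0 => claim3 y (by linarith) hy0) hhx h1
    · exact no_two_zeros_of_deriv_neg hgt hcont
        (fun y hy => ((hder y (by linarith)).differentiableAt))
        (fun y hy hy0 => claim3 y (by linarith) hy0) h1 hhx
  exact ⟨h1, claim2, claim3, claim4⟩
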